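/- Let k be a commutative ring, n ≥ 1, F the free group on generators t_1, …, t_n, Λ = MonoidAlgebra k F, and ε : Λ → k the augmentation. Let γ ∈ Λ be comonic, i.e., ε(γ) = 1, let Λγ = Submodule.span Λ {γ} be the left ideal generated by γ, and let M = Λ ⧸ Λγ. Then M is a Sato module: the map (Fin n → M) → M sending (m_1, …, m_n) to Σ_{i=1}^n (t_i − 1) • m_i is bijective. -/

import Mathlib

/-- The augmentation map of the group algebra of the free group of rank `n`:
the `k`-algebra homomorphism sending every group element to `1`. -/
noncomputable def freeGroupAug (k : Type*) [CommRing k] (n : ℕ) :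
    MonoidAlgebra k (FreeGroup (Fin n)) →ₐ[k] k :=
  MonoidAlgebra.lift k k (FreeGroup (Fin n)) 1

namespace Sato6

variable (k : Type*) [CommRing k] (n : ℕ)

local notation "F" => FreeGroup (Fin n)
local notation "Λ" => MonoidAlgebra k (FreeGroup (Fin n))

/-- Carrier for the Magnus-type embedding: pairs (a, d). -/
@[ext] structure T where
  a : MonoidAlgebra k (FreeGroup (Fin n))
  d : Fin n → MonoidAlgebra k (FreeGroup (Fin n))

variable {k n}

lemma pure_eq (x : Fin n) : (pure x : FreeGroup (Fin n)) = FreeGroup.of x := rfl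

noncomputable instance : Monoid (T k n) where
  mul x y := ⟨x.a * y.a, fun i => x.d i * y.a + y.d i⟩
  one := ⟨1, 0⟩
  mul_assoc x y z := by
    refine T.ext ?_ ?_
    · show x.a * y.a * z.a = x.a * (y.a * z.a); rw [mul_assoc]
    · funext i
      show (x.d i * y.a + y.d i) * z.a + z.d i
        = x.d i * (y.a * z.a) + (y.d i * z.a + z.d i)
      noncomm_ring
  one_mul x := by
    refine T.ext ?_ ?_
    · show 1 * x.a = x.a; rw [one_mul]
    · funext i
      show (0 : Fin n → MonoidAlgebra k (FreeGroup (Fin n))) i * x.a + x.d i = x.d i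
      simp
  mul_one x := by
    refine T.ext ?_ ?_
    · show x.a * 1 = x.a; rw [mul_one]
    · funext i
      show x.d i * 1 + (0 : Fin n → MonoidAlgebra k (FreeGroup (Fin n))) i = x.d i
      simp

lemma mul_a (x y : T k n) : (x * y).a = x.a * y.a := rfl
lemma mul_d (x y : T k n) (i : Fin n) : (x * y).d i = x.d i * y.a + y.d i := rfl
lemma one_a : (1 : T k n).a = 1 := rfl
lemma one_d : (1 : T k n).d = 0 := rfl

noncomputable def ofm : FreeGroup (Fin n) →* MonoidAlgebra k (FreeGroup (Fin n)) :=
  MonoidAlgebra.of k (FreeGroup (Fin n))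

/-- The generating units of `T`. -/
noncomputable def u (i : Fin n) : (T k n)ˣ where
  val := ⟨ofm (FreeGroup.of i), Pi.single i 1⟩
  inv := ⟨ofm (FreeGroup.of i)⁻¹, -Pi.single i (ofm (FreeGroup.of i)⁻¹)⟩
  val_inv := by
    refine T.ext ?_ ?_
    · show ofm (FreeGroup.of i) * ofm (FreeGroup.of i)⁻¹ = (1 : T k n).a
      rw [← map_mul, mul_inv_cancel, map_one, one_a]
    · funext j
      rw [mul_d, one_d]
      rcases eq_or_ne j i with h | h <;> simp [Pi.single_apply, h]
  inv_val := by
    refine T.ext ?_ ?_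
    · show ofm (FreeGroup.of i)⁻¹ * ofm (FreeGroup.of i) = (1 : T k n).a
      rw [← map_mul, inv_mul_cancel, map_one, one_a]
    · funext j
      rw [mul_d, one_d]
      rcases eq_or_ne j i with h | h
      · subst h
        simp [Pi.single_apply, ← map_mul]
      · simp [Pi.single_apply, h]

noncomputable def fox : FreeGroup (Fin n) →* (T k n)ˣ := FreeGroup.lift u

/-- The (right) Fox derivative vector of a group element. -/
noncomputable def D (g : FreeGroup (Fin n)) : Fin n → MonoidAlgebra k (FreeGroup (Fin n)) :=
  ((fox g : (T k n)ˣ) : T k n).d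

lemma fox_of (x : Fin n) : fox (FreeGroup.of x) = u (k := k) x := FreeGroup.lift_apply_of

lemma a_fox (g : FreeGroup (Fin n)) : ((fox g : (T k n)ˣ) : T k n).a = ofm g := by
  induction g using FreeGroup.induction_on with
  | C1 => rw [map_one, map_one]; rfl
  | of x => rw [fox_of]; rfl
  | inv_of x _ =>
    rw [map_inv, fox_of]
    show ((u (k := k) x)⁻¹ : (T k n)ˣ).val.a = _
    rw [← Units.inv_eq_val_inv]
    rfl
  | mul x y hx hy =>
    rw [map_mul]
    show ((fox x : (T k n)ˣ) * (fox y : (T k n)ˣ) : T k n).a = _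
    rw [mul_a, hx, hy, map_mul]

lemma D_one : D (1 : FreeGroup (Fin n)) = (0 : Fin n → Λ) := by
  show ((fox 1 : (T k n)ˣ) : T k n).d = 0
  rw [map_one]; rfl

lemma D_mul (g h : FreeGroup (Fin n)) (i : Fin n) :
    (D (g * h) i : Λ) = D g i * ofm h + D h i := by
  unfold D
  rw [show fox (k := k) (g*h) = fox g * fox h from map_mul _ _ _,
    Units.val_mul, mul_d, a_fox h]

lemma D_of (i : Fin n) : D (FreeGroup.of i) = Pi.single i (1 : Λ) := by
  show ((fox (FreeGroup.of i) : (T k n)ˣ) : T k n).d = _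
  rw [fox_of]
  rfl

/-- Generators minus one. -/
noncomputable def Tg (i : Fin n) : MonoidAlgebra k (FreeGroup (Fin n)) :=
  ofm (FreeGroup.of i) - 1

lemma sum_tg_single (x : Fin n) (c : Λ) :
    ∑ i, Tg (k := k) i * (Pi.single x c : Fin n → Λ) i = Tg x * c := by
  have : ∀ i, Tg (k := k) i * (Pi.single x c : Fin n → Λ) i = if i = x then Tg i * c else 0 := by
    intro i
    rw [Pi.single_apply]
    split <;> simp
  rw [Finset.sum_congr rfl fun i _ => this i, Finset.sum_ite_eq' Finset.univ x
    (fun i => Tg (k := k) i * c)]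
  simp

/-- Group-level Fox calculus identity. -/
lemma Dspec (g : FreeGroup (Fin n)) : (ofm g : Λ) = 1 + ∑ i, Tg i * D g i := by
  induction g using FreeGroup.induction_on with
  | C1 =>
    rw [map_one]
    simp [D_one]
  | of x =>
    rw [D_of, sum_tg_single, mul_one, Tg]
    noncomm_ring
  | inv_of x _ =>
    have hD : ∀ i, (D ((FreeGroup.of x)⁻¹ : FreeGroup (Fin n)) i : Λ)
        = -(D (FreeGroup.of x) i * ofm ((FreeGroup.of x)⁻¹ : FreeGroup (Fin n))) := by
      intro i
      have h0 := D_mul (k := k) (FreeGroup.of x) ((FreeGroup.of x)⁻¹) i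
      rw [mul_inv_cancel, D_one] at h0
      simp only [Pi.zero_apply] at h0
      exact (neg_eq_of_add_eq_zero_right h0.symm).symm
    have : ∀ i, Tg (k := k) i * D ((FreeGroup.of x)⁻¹ : FreeGroup (Fin n)) i
        = -(Tg i * (Pi.single x 1 : Fin n → Λ) i * ofm ((FreeGroup.of x)⁻¹ : FreeGroup (Fin n))) := by
      intro i
      rw [hD, D_of]
      rw [mul_neg, mul_assoc]
    rw [Finset.sum_congr rfl fun i _ => this i, Finset.sum_neg_distrib]
    rw [← Finset.sum_mul, sum_tg_single, mul_one]
    have hh : ofm (FreeGroup.of x) * ofm ((FreeGroup.of x)⁻¹ : FreeGroup (Fin n)) = (1 : Λ) := by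
      rw [← map_mul, mul_inv_cancel, map_one]
    rw [Tg, sub_mul, one_mul, hh]
    noncomm_ring
  | mul x y hx hy =>
    rw [map_mul, hx]
    have : ∀ i, Tg (k := k) i * D (x * y) i = Tg i * D x i * ofm y + Tg i * D y i := by
      intro i
      rw [D_mul]
      noncomm_ring
    rw [Finset.sum_congr rfl fun i _ => this i, Finset.sum_add_distrib, ← Finset.sum_mul]
    rw [hy]
    noncomm_ring


/-- `single g c = c • of g`. -/
lemma single_eq_smul (g : FreeGroup (Fin n)) (c : k) :
    (MonoidAlgebra.single g c : Λ) = c • ofm g := by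
  rw [ofm, MonoidAlgebra.of_apply]
  show MonoidAlgebra.single g c = c • MonoidAlgebra.single g 1
  rw [MonoidAlgebra.smul_single', mul_one]

/-- Linear extension of the Fox derivative. -/
noncomputable def dm (j : Fin n) :
    MonoidAlgebra k (FreeGroup (Fin n)) →+ MonoidAlgebra k (FreeGroup (Fin n)) :=
  (Finsupp.liftAddHom fun g =>
    (smulAddHom k (MonoidAlgebra k (FreeGroup (Fin n)))).flip (D g j)).comp
    MonoidAlgebra.coeffAddEquiv.toAddMonoidHom

lemma dm_single (j : Fin n) (g : FreeGroup (Fin n)) (c : k) :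
    dm j (MonoidAlgebra.single g c) = c • D g j := by
  show Finsupp.liftAddHom _ (Finsupp.single g c) = _
  exact Finsupp.liftAddHom_apply_single _ _ _

lemma aug_of (g : FreeGroup (Fin n)) : freeGroupAug k n (ofm g) = 1 := by
  rw [freeGroupAug, ofm, MonoidAlgebra.lift_of]
  rfl

lemma aug_single (g : FreeGroup (Fin n)) (c : k) :
    freeGroupAug k n (MonoidAlgebra.single g c) = c := by
  rw [single_eq_smul, map_smul, aug_of, smul_eq_mul, mul_one]

lemma aug_Tg (i : Fin n) : freeGroupAug k n (Tg i) = 0 := by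
  rw [Tg, map_sub, aug_of, map_one, sub_self]

/-- Master identity: Fox calculus expansion of an arbitrary element. -/
lemma MI (x : Λ) :
    x = freeGroupAug k n x • (1 : Λ) + ∑ i, Tg i * dm i x := by
  induction x using MonoidAlgebra.induction_linear with
  | zero => simp
  | add f g hf hg =>
    conv_lhs => rw [hf, hg]
    rw [map_add, add_smul]
    have : ∀ i, Tg (k := k) i * dm i (f + g) = Tg i * dm i f + Tg i * dm i g := by
      intro i
      rw [map_add, mul_add]
    rw [Finset.sum_congr rfl fun i _ => this i, Finset.sum_add_distrib]
    abel
  | single g c =>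
    rw [aug_single]
    have : ∀ i, Tg (k := k) i * dm i (MonoidAlgebra.single g c) = c • (Tg i * D g i) := by
      intro i
      rw [dm_single, mul_smul_comm]
    rw [Finset.sum_congr rfl fun i _ => this i, ← Finset.smul_sum, single_eq_smul,
      ← smul_add, ← Dspec]

lemma dTi (i j : Fin n) (x : Λ) :
    dm j (Tg i * x) = if j = i then x else 0 := by
  induction x using MonoidAlgebra.induction_linear with
  | zero =>
    rw [mul_zero, map_zero]
    split <;> rfl
  | add f g hf hg =>
    rw [mul_add, map_add, hf, hg]
    split <;> simp
  | single g c =>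
    have h1 : Tg (k := k) i * MonoidAlgebra.single g c
        = MonoidAlgebra.single (FreeGroup.of i * g) c - MonoidAlgebra.single g c := by
      rw [Tg, sub_mul, one_mul, ofm, MonoidAlgebra.of_apply,
        MonoidAlgebra.single_mul_single, one_mul]
    rw [h1, map_sub,
      dm_single, dm_single, D_mul, D_of, Pi.single_apply]
    by_cases h : j = i
    · rw [if_pos h, if_pos h, one_mul, smul_add, add_sub_cancel_right, single_eq_smul]
    · rw [if_neg h, if_neg h, zero_mul, zero_add, sub_self]

lemma dKey (j : Fin n) (x : Fin n → Λ) :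
    dm j (∑ i, Tg i * x i) = x j := by
  rw [map_sum, Finset.sum_congr rfl fun i _ => dTi i j (x i),
    Finset.sum_ite_eq Finset.univ j x]
  simp

end Sato6


open Sato6

/-- For a comonic polynomial `γ` of the group algebra `Λ` of a free group, the cokernel
`Λ ⧸ Λγ` is a (weak) Sato module: the map `(m_1, …, m_n) ↦ ∑ i (t i - 1) • m i` is
bijective. -/
theorem stmt6 (k : Type*) [CommRing k] (n : ℕ) (hn : 1 ≤ n)
    (γ : MonoidAlgebra k (FreeGroup (Fin n))) (hγ : freeGroupAug k n γ = 1) :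
    Function.Bijective
      (fun m : Fin n → (MonoidAlgebra k (FreeGroup (Fin n)) ⧸
          Submodule.span (MonoidAlgebra k (FreeGroup (Fin n))) {γ}) =>
        ∑ i : Fin n,
          ((MonoidAlgebra.of k (FreeGroup (Fin n)) (FreeGroup.of i)
            : MonoidAlgebra k (FreeGroup (Fin n))) - 1) • m i) := by
  classical
  set I : Submodule (MonoidAlgebra k (FreeGroup (Fin n))) (MonoidAlgebra k (FreeGroup (Fin n))) :=
    Submodule.span (MonoidAlgebra k (FreeGroup (Fin n))) {γ} with hI
  have hγI : γ ∈ I := Submodule.mem_span_singleton_self γ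
  have key : ∀ (c : Fin n → MonoidAlgebra k (FreeGroup (Fin n))),
      I.mkQ (∑ i, Tg i * c i) = ∑ i, Tg (k := k) i • (I.mkQ (c i)) := by
    intro c
    rw [map_sum]
    refine Finset.sum_congr rfl fun i _ => ?_
    rw [← smul_eq_mul, map_smul]
  constructor
  · -- injectivity
    intro m m' hmm
    have hmm' : ∑ i, Tg (k := k) i • m i = ∑ i, Tg (k := k) i • m' i := hmm
    choose l hl using fun i => Submodule.Quotient.mk_surjective I (m i)
    choose l' hl' using fun i => Submodule.Quotient.mk_surjective I (m' i)
    have h1 : I.mkQ (∑ i, Tg i * (l i - l' i)) = 0 := by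
      rw [key]
      have : ∀ i, Tg (k := k) i • I.mkQ (l i - l' i) = Tg (k := k) i • m i - Tg (k := k) i • m' i := by
        intro i
        rw [map_sub, smul_sub, Submodule.mkQ_apply, Submodule.mkQ_apply, hl, hl']
      rw [Finset.sum_congr rfl fun i _ => this i, Finset.sum_sub_distrib, hmm', sub_self]
    have hmem : ∑ i, Tg (k := k) i * (l i - l' i) ∈ I := by
      rwa [Submodule.mkQ_apply, Submodule.Quotient.mk_eq_zero] at h1
    obtain ⟨μ, hμ⟩ := Submodule.mem_span_singleton.mp hmem
    rw [smul_eq_mul] at hμ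
    have hεμ : freeGroupAug k n μ = 0 := by
      have h2 := congrArg (freeGroupAug k n) hμ
      rw [map_mul, hγ, mul_one, map_sum] at h2
      have : ∀ i ∈ Finset.univ, freeGroupAug k n (Tg (k := k) i * (l i - l' i)) = 0 := by
        intro i _
        rw [map_mul, aug_Tg, zero_mul]
      rw [Finset.sum_congr rfl this, Finset.sum_const_zero] at h2
      exact h2
    have hμexp : μ = ∑ i, Tg (k := k) i * dm i μ := by
      have h3 := MI (k := k) μ
      rwa [hεμ, zero_smul, zero_add] at h3
    have hzero : ∑ i, Tg (k := k) i * (l i - l' i - dm i μ * γ) = 0 := by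
      have : ∀ i, Tg (k := k) i * (l i - l' i - dm i μ * γ)
          = Tg i * (l i - l' i) - Tg i * dm i μ * γ := by
        intro i
        noncomm_ring
      rw [Finset.sum_congr rfl fun i _ => this i, Finset.sum_sub_distrib, ← Finset.sum_mul,
        ← hμexp, hμ, sub_self]
    have hj : ∀ j, l j - l' j = dm j μ * γ := by
      intro j
      have h4 := dKey (k := k) j (fun i => l i - l' i - dm i μ * γ)
      rw [hzero, map_zero] at h4
      have h5 : l j - l' j - dm j μ * γ = 0 := h4.symm
      rw [sub_eq_zero] at h5
      exact h5
    funext j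
    have hmemj : l j - l' j ∈ I := by
      rw [hj j, ← smul_eq_mul]
      exact Submodule.smul_mem I _ hγI
    rw [← hl j, ← hl' j]
    exact (Submodule.Quotient.eq I).mpr hmemj
  · -- surjectivity
    intro m
    obtain ⟨l, hl⟩ := Submodule.Quotient.mk_surjective I m
    refine ⟨fun i => I.mkQ (dm i l - freeGroupAug k n l • dm i (γ - 1)), ?_⟩
    show ∑ i, Tg (k := k) i • I.mkQ (dm i l - freeGroupAug k n l • dm i (γ - 1)) = m
    rw [← key, ← hl, Submodule.mkQ_apply, Submodule.Quotient.eq]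
    have hεγ1 : freeGroupAug k n (γ - 1) = 0 := by
      rw [map_sub, hγ, map_one, sub_self]
    have h2 := MI (k := k) (γ - 1)
    rw [hεγ1, zero_smul, zero_add] at h2
    set c : k := freeGroupAug k n l with hc
    have h1 : l = c • (1 : MonoidAlgebra k (FreeGroup (Fin n))) + ∑ i, Tg (k := k) i * dm i l := MI l
    have hexp : ∑ i, Tg (k := k) i * (dm i l - c • dm i (γ - 1)) - l = -(c • γ) := by
      have : ∀ i, Tg (k := k) i * (dm i l - c • dm i (γ - 1))
          = Tg i * dm i l - c • (Tg i * dm i (γ - 1)) := by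
        intro i
        rw [mul_sub, mul_smul_comm]
      rw [Finset.sum_congr rfl fun i _ => this i, Finset.sum_sub_distrib, ← Finset.smul_sum,
        ← h2]
      set S : MonoidAlgebra k (FreeGroup (Fin n)) := ∑ i, Tg (k := k) i * dm i l with hS
      rw [h1]
      rw [smul_sub]
      abel
    rw [hexp]
    exact neg_mem (Submodule.smul_of_tower_mem I c hγI)
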